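/- For all r in the open interval (0, π/√8), the expression 2 + αβ is strictly positive, where α = √8·cot(√8·r) and β = √2·cot(√2·r); equivalently, 2 + 4·cot(√8·r)·cot(√2·r) ≠ 0. -/

import Mathlib

open Real

lemma aux_cot (t : ℝ) (hsin : 0 < Real.sin t) (hcos : 0 < Real.cos t) :
    2 + (2 * Real.sqrt 2 * Real.cot (2 * t)) * (Real.sqrt 2 * Real.cot t)
      = 2 * (Real.cos t / Real.sin t) ^ 2 := by
  rw [Real.cot_eq_cos_div_sin, Real.cot_eq_cos_div_sin, Real.sin_two_mul,
    Real.cos_two_mul]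
  have hs2sq : Real.sqrt 2 * Real.sqrt 2 = 2 := Real.mul_self_sqrt (by norm_num)
  have hpyth : Real.sin t ^ 2 + Real.cos t ^ 2 = 1 := Real.sin_sq_add_cos_sq t
  field_simp
  linear_combination 2 * hpyth + (2 * Real.cos t ^ 2 - 1) * hs2sq

/-- For all `r ∈ (0, π/√8)`, with `α = √8·cot(√8 r)` and `β = √2·cot(√2 r)`,
the quantity `2 + α·β` is strictly positive; in particular it is nonzero. -/
theorem stmt_0 (r : ℝ) (hr0 : 0 < r) (hr1 : r < π / Real.sqrt 8) :
    0 < 2 + (Real.sqrt 8 * Real.cot (Real.sqrt 8 * r)) *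
          (Real.sqrt 2 * Real.cot (Real.sqrt 2 * r)) ∧
    2 + (Real.sqrt 8 * Real.cot (Real.sqrt 8 * r)) *
          (Real.sqrt 2 * Real.cot (Real.sqrt 2 * r)) ≠ 0 := by
  have h8 : Real.sqrt 8 = 2 * Real.sqrt 2 := by
    rw [show (8:ℝ) = 2^2 * 2 by norm_num, Real.sqrt_mul (by positivity),
      Real.sqrt_sq (by norm_num)]
  have hs2 : (0:ℝ) < Real.sqrt 2 := by positivity
  have ht0 : 0 < Real.sqrt 2 * r := by positivity
  have ht1 : Real.sqrt 2 * r < π / 2 := by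
    have h8pos : (0:ℝ) < Real.sqrt 8 := by positivity
    have hrπ : r * Real.sqrt 8 < π := (lt_div_iff₀ h8pos).mp hr1
    rw [h8] at hrπ
    nlinarith
  have hsin : 0 < Real.sin (Real.sqrt 2 * r) :=
    Real.sin_pos_of_pos_of_lt_pi ht0 (by linarith [Real.pi_pos])
  have hcos : 0 < Real.cos (Real.sqrt 2 * r) :=
    Real.cos_pos_of_mem_Ioo ⟨by linarith [Real.pi_pos], ht1⟩
  have key : 2 + (Real.sqrt 8 * Real.cot (Real.sqrt 8 * r)) *
          (Real.sqrt 2 * Real.cot (Real.sqrt 2 * r))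
      = 2 * (Real.cos (Real.sqrt 2 * r) / Real.sin (Real.sqrt 2 * r)) ^ 2 := by
    have := aux_cot (Real.sqrt 2 * r) hsin hcos
    rw [h8, show 2 * Real.sqrt 2 * r = 2 * (Real.sqrt 2 * r) by ring]
    exact this
  have hpos : 0 < 2 + (Real.sqrt 8 * Real.cot (Real.sqrt 8 * r)) *
          (Real.sqrt 2 * Real.cot (Real.sqrt 2 * r)) := by
    rw [key]; positivity
  exact ⟨hpos, ne_of_gt hpos⟩
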